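/- Let β ∈ ℝ, D > 0, and let φ : ℝ² → ℝ be continuous. Let P₁, P₂, P₃ ∈ ℝ² be the vertices of a nondegenerate triangle, i.e. P₂ − P₁ and P₃ − P₁ are linearly independent. Define F₁(v) = ℱ(v; P₁, P₂) and F₂(v) = ℱ(v; P₁, P₃) for constant vector fields v ∈ ℝ². Then the linear map v ↦ (F₁(v), F₂(v)) from ℝ² to ℝ² is injective; equivalently, the 2×2 matrix with entries F_{ji} = F_j(e_i) (where e₁ = (1,0), e₂ = (0,1) form the basis of the divergence-free Raviart–Thomas space RT₀⁰) is nonsingular. -/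

import Mathlib

open MeasureTheory intervalIntegral
open scoped RealInnerProductSpace

/-- The exponentially weighted line functional `ℱ(v; P, Q)` of a constant vector field `v`
along the segment from `P` to `Q`:
`ℱ(v; P, Q) = (e^{−βφ(Q)}/D) ∫₀^S e^{βφ(P + s·n)} (v · n) ds`,
where `S = ‖Q − P‖` and `n = (Q − P)/S`. -/
noncomputable def expFitFunctional (β D : ℝ) (φ : EuclideanSpace ℝ (Fin 2) → ℝ)
    (v P Q : EuclideanSpace ℝ (Fin 2)) : ℝ :=
  (Real.exp (-(β * φ Q)) / D) *
    ∫ s in (0:ℝ)..‖Q - P‖,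
      Real.exp (β * φ (P + s • (‖Q - P‖⁻¹ • (Q - P)))) * ⟪v, ‖Q - P‖⁻¹ • (Q - P)⟫

lemma expFit_key (β D : ℝ) (hD : 0 < D) (φ : EuclideanSpace ℝ (Fin 2) → ℝ)
    (hφ : Continuous φ) (P Q : EuclideanSpace ℝ (Fin 2)) (h : Q - P ≠ 0) :
    ∃ c : ℝ, 0 < c ∧ ∀ v, expFitFunctional β D φ v P Q = c * ⟪v, Q - P⟫ := by
  have hS : 0 < ‖Q - P‖ := norm_pos_iff.2 h
  set S := ‖Q - P‖ with hSdef
  set n : EuclideanSpace ℝ (Fin 2) := S⁻¹ • (Q - P) with hn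
  have hcont : Continuous fun s : ℝ => Real.exp (β * φ (P + s • n)) := by
    fun_prop
  have hI : 0 < ∫ s in (0:ℝ)..S, Real.exp (β * φ (P + s • n)) :=
    intervalIntegral_pos_of_pos (hcont.intervalIntegrable 0 S)
      (fun x => Real.exp_pos _) hS
  refine ⟨(Real.exp (-(β * φ Q)) / D) * (∫ s in (0:ℝ)..S, Real.exp (β * φ (P + s • n))) * S⁻¹,
    by positivity, fun v => ?_⟩
  have : expFitFunctional β D φ v P Q
      = (Real.exp (-(β * φ Q)) / D) *
        ((∫ s in (0:ℝ)..S, Real.exp (β * φ (P + s • n))) * ⟪v, n⟫) := by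
    rw [expFitFunctional, intervalIntegral.integral_mul_const]
  rw [this, hn, real_inner_smul_right]
  ring

lemma lin_indep_det (u w : EuclideanSpace ℝ (Fin 2))
    (hind : LinearIndependent ℝ ![u, w]) : u 0 * w 1 - u 1 * w 0 ≠ 0 := by
  set A : Matrix (Fin 2) (Fin 2) ℝ := !![u 0, u 1; w 0, w 1] with hA
  have h1 : LinearIndependent ℝ (fun i => A i) := by
    have := hind.map' (WithLp.linearEquiv 2 ℝ (Fin 2 → ℝ)).toLinearMap
      (LinearEquiv.ker _)
    convert this using 1
    funext i j
    fin_cases i <;> fin_cases j <;>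
      simp [A, WithLp.linearEquiv, Matrix.cons_val_zero, Matrix.cons_val_one]
    all_goals rfl
  have hu : IsUnit A.det := (Matrix.isUnit_iff_isUnit_det A).1
    (Matrix.linearIndependent_rows_iff_isUnit.1 h1)
  have := hu.ne_zero
  rwa [show A.det = u 0 * w 1 - u 1 * w 0 by simp [A, Matrix.det_fin_two_of]] at this

/-- For a nondegenerate triangle with vertices `P₁, P₂, P₃`, the linear map
`v ↦ (ℱ(v; P₁, P₂), ℱ(v; P₁, P₃))` on constant vector fields is injective; equivalently,
the 2×2 matrix with entries `F_{ji} = F_j(e_i)`, where `e₁, e₂` is the basis `(1,0), (0,1)`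
of the divergence-free Raviart–Thomas space `RT₀⁰`, is nonsingular. -/
theorem expFit_interpolation_matrix_nonsingular_vertices
    (β D : ℝ) (hD : 0 < D) (φ : EuclideanSpace ℝ (Fin 2) → ℝ) (hφ : Continuous φ)
    (P₁ P₂ P₃ : EuclideanSpace ℝ (Fin 2))
    (hind : LinearIndependent ℝ ![P₂ - P₁, P₃ - P₁]) :
    Function.Injective (fun v : EuclideanSpace ℝ (Fin 2) =>
      (expFitFunctional β D φ v P₁ P₂, expFitFunctional β D φ v P₁ P₃)) ∧
    Matrix.det
      !![expFitFunctional β D φ (EuclideanSpace.single 0 1) P₁ P₂,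
         expFitFunctional β D φ (EuclideanSpace.single 1 1) P₁ P₂;
         expFitFunctional β D φ (EuclideanSpace.single 0 1) P₁ P₃,
         expFitFunctional β D φ (EuclideanSpace.single 1 1) P₁ P₃] ≠ 0 := by
  have hu : P₂ - P₁ ≠ 0 := by
    have := hind.ne_zero 0; simpa using this
  have hw : P₃ - P₁ ≠ 0 := by
    have := hind.ne_zero 1; simpa using this
  obtain ⟨c₁, hc₁, he₁⟩ := expFit_key β D hD φ hφ P₁ P₂ hu
  obtain ⟨c₂, hc₂, he₂⟩ := expFit_key β D hD φ hφ P₁ P₃ hw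
  set u := P₂ - P₁
  set w := P₃ - P₁
  have hdet : u 0 * w 1 - u 1 * w 0 ≠ 0 := lin_indep_det u w hind
  constructor
  · intro v v' hvv
    have h1 : c₁ * ⟪v, u⟫ = c₁ * ⟪v', u⟫ := by
      have := congrArg Prod.fst hvv; simpa [he₁] using this
    have h2 : c₂ * ⟪v, w⟫ = c₂ * ⟪v', w⟫ := by
      have := congrArg Prod.snd hvv; simpa [he₂] using this
    have e1 : ⟪v - v', u⟫ = 0 := by
      rw [inner_sub_left]; have := mul_left_cancel₀ hc₁.ne' h1; linarith
    have e2 : ⟪v - v', w⟫ = 0 := by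
      rw [inner_sub_left]; have := mul_left_cancel₀ hc₂.ne' h2; linarith
    set d : EuclideanSpace ℝ (Fin 2) := v - v' with hd
    have e1' : d 0 * u 0 + d 1 * u 1 = 0 := by
      have h := e1; simp [PiLp.inner_apply, RCLike.inner_apply, Fin.sum_univ_two] at h; linarith
    have e2' : d 0 * w 0 + d 1 * w 1 = 0 := by
      have h := e2; simp [PiLp.inner_apply, RCLike.inner_apply, Fin.sum_univ_two] at h; linarith
    have hd0 : d 0 = 0 := by
      have : d 0 * (u 0 * w 1 - u 1 * w 0)
          = w 1 * (d 0 * u 0 + d 1 * u 1) - u 1 * (d 0 * w 0 + d 1 * w 1) := by ring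
      rw [e1', e2'] at this
      simpa using (mul_eq_zero.1 (by linarith)).resolve_right hdet
    have hd1 : d 1 = 0 := by
      have : d 1 * (u 0 * w 1 - u 1 * w 0)
          = u 0 * (d 0 * w 0 + d 1 * w 1) - w 0 * (d 0 * u 0 + d 1 * u 1) := by ring
      rw [e1', e2'] at this
      simpa using (mul_eq_zero.1 (by linarith)).resolve_right hdet
    have : d = 0 := by
      ext i; fin_cases i
      · exact hd0
      · exact hd1
    exact sub_eq_zero.1 this
  · have hsingle : ∀ (i : Fin 2) (x : EuclideanSpace ℝ (Fin 2)),
        ⟪(EuclideanSpace.single i (1:ℝ)), x⟫ = x i := by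
      intro i x
      simp [EuclideanSpace.inner_single_left]
    rw [Matrix.det_fin_two_of, he₁, he₁, he₂, he₂, hsingle, hsingle, hsingle, hsingle]
    have : c₁ * u 0 * (c₂ * w 1) - c₁ * u 1 * (c₂ * w 0)
        = (c₁ * c₂) * (u 0 * w 1 - u 1 * w 0) := by ring
    rw [this]
    exact mul_ne_zero (mul_ne_zero hc₁.ne' hc₂.ne') hdet
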